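/- (Boundary condition at small radius from sublinear growth at zero) Let μ₁ = π²/4 and h(t) = cos(πt/2) for t ∈ [0,1], and let G(t,s) = 1 − t if 0 ≤ s ≤ t ≤ 1 and G(t,s) = 1 − s if 0 ≤ t < s ≤ 1. Let f : [0,1] × [0,∞) × [0,∞) → [0,∞) be continuous and suppose there exist ε > 0 and δ > 0 such that f(t, x₁, x₂) ≥ (μ₁ + ε)·x₁ for all x₁ ∈ [0, δ], all x₂ ≥ 0 and all t ∈ [0,1]. Then for every r ∈ (0, δ), there do not exist continuous functions x₁, x₂ : [0,1] → [0,∞) with ‖x₁‖_∞ = r and a number μ > 0 such that x₁(t) = ∫_0^1 G(t,s) f(s, x₁(s), x₂(s)) ds + μ·h(t) for all t ∈ [0,1]. -/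

import Mathlib

open Set MeasureTheory intervalIntegral Real

lemma aux_deriv_sin (s : ℝ) : HasDerivAt (fun s : ℝ => (2/π) * Real.sin (π*s/2)) (Real.cos (π*s/2)) s := by
  have hπ : (π:ℝ) ≠ 0 := Real.pi_ne_zero
  have h1 : HasDerivAt (fun s : ℝ => π*s/2) (π/2) s := by
    simpa using ((hasDerivAt_id s).const_mul π).div_const 2
  have h2 := (Real.hasDerivAt_sin (π*s/2)).comp s h1
  have h3 := h2.const_mul (2/π)
  refine h3.congr_deriv ?_
  field_simp

lemma aux_int1 (t : ℝ) : ∫ s in (0:ℝ)..t, Real.cos (π*s/2) = (2/π) * Real.sin (π*t/2) := by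
  have := intervalIntegral.integral_eq_sub_of_hasDerivAt (a := (0:ℝ)) (b := t) (f := fun s : ℝ => (2/π) * Real.sin (π*s/2))
    (fun s _ => aux_deriv_sin s) (by apply Continuous.intervalIntegrable; continuity)
  simpa using this

lemma aux_deriv2 (s : ℝ) : HasDerivAt
    (fun s : ℝ => (1-s) * ((2/π) * Real.sin (π*s/2)) - (4/π^2) * Real.cos (π*s/2))
    ((1-s) * Real.cos (π*s/2)) s := by
  have hπ : (π:ℝ) ≠ 0 := Real.pi_ne_zero
  have h1 : HasDerivAt (fun s : ℝ => π*s/2) (π/2) s := by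
    simpa using ((hasDerivAt_id s).const_mul π).div_const 2
  have hs := (Real.hasDerivAt_sin (π*s/2)).comp s h1
  have hc := (Real.hasDerivAt_cos (π*s/2)).comp s h1
  have hlin : HasDerivAt (fun s : ℝ => 1 - s) (-1) s := by
    simpa using (hasDerivAt_id s).const_sub 1
  have := (hlin.mul (hs.const_mul (2/π))).sub (hc.const_mul (4/π^2))
  refine this.congr_deriv ?_
  simp only [Function.comp_apply]
  field_simp
  ring

lemma aux_int2 (t : ℝ) : ∫ s in t..(1:ℝ), (1-s) * Real.cos (π*s/2)
    = (4/π^2) * Real.cos (π*t/2) - (1-t) * ((2/π) * Real.sin (π*t/2)) := by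
  have := intervalIntegral.integral_eq_sub_of_hasDerivAt (a := t) (b := (1:ℝ))
    (f := fun s : ℝ => (1-s) * ((2/π) * Real.sin (π*s/2)) - (4/π^2) * Real.cos (π*s/2))
    (fun s _ => aux_deriv2 s) (by apply Continuous.intervalIntegrable; continuity)
  rw [this]
  simp [Real.cos_pi_div_two]

lemma aux_key (t : ℝ) (ht : t ∈ Set.Icc (0:ℝ) 1) :
    ∫ s in (0:ℝ)..1, (1 - max t s) * Real.cos (π*s/2) = (4/π^2) * Real.cos (π*t/2) := by
  have hcont : Continuous (fun s : ℝ => (1 - max t s) * Real.cos (π*s/2)) :=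
    (continuous_const.sub ((continuous_const.max continuous_id))).mul (by continuity)
  rw [← intervalIntegral.integral_add_adjacent_intervals (b := t)
    (hcont.intervalIntegrable _ _) (hcont.intervalIntegrable _ _)]
  have e1 : ∫ s in (0:ℝ)..t, (1 - max t s) * Real.cos (π*s/2)
      = ∫ s in (0:ℝ)..t, (1-t) * Real.cos (π*s/2) := by
    apply intervalIntegral.integral_congr
    intro s hs
    rw [Set.uIcc_of_le ht.1] at hs
    simp [max_eq_left hs.2]
  have e2 : ∫ s in t..(1:ℝ), (1 - max t s) * Real.cos (π*s/2)
      = ∫ s in t..(1:ℝ), (1-s) * Real.cos (π*s/2) := by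
    apply intervalIntegral.integral_congr
    intro s hs
    rw [Set.uIcc_of_le ht.2] at hs
    simp [max_eq_right hs.1]
  rw [e1, e2, intervalIntegral.integral_const_mul, aux_int1, aux_int2]
  ring
set_option maxHeartbeats 1000000 in
theorem no_solution_at_small_radius
    (G : ℝ → ℝ → ℝ)
    (hG : ∀ t ∈ Set.Icc (0:ℝ) 1, ∀ s ∈ Set.Icc (0:ℝ) 1,
      (s ≤ t → G t s = 1 - t) ∧ (t < s → G t s = 1 - s))
    (f : ℝ → ℝ → ℝ → ℝ)
    (hf : ContinuousOn (fun p : ℝ × ℝ × ℝ => f p.1 p.2.1 p.2.2)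
      (Set.Icc 0 1 ×ˢ Set.Ici 0 ×ˢ Set.Ici 0))
    (hfpos : ∀ t ∈ Set.Icc (0:ℝ) 1, ∀ u ∈ Set.Ici (0:ℝ), ∀ v ∈ Set.Ici (0:ℝ),
      0 ≤ f t u v)
    (ε δ : ℝ) (hε : 0 < ε) (hδ : 0 < δ)
    (hgrow : ∀ t ∈ Set.Icc (0:ℝ) 1, ∀ u ∈ Set.Icc (0:ℝ) δ, ∀ v ∈ Set.Ici (0:ℝ),
      (π ^ 2 / 4 + ε) * u ≤ f t u v)
    (r : ℝ) (hr0 : 0 < r) (hrδ : r < δ) :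
    ¬ ∃ (x₁ x₂ : ℝ → ℝ) (μ : ℝ),
      ContinuousOn x₁ (Set.Icc 0 1) ∧ ContinuousOn x₂ (Set.Icc 0 1) ∧
      (∀ t ∈ Set.Icc (0:ℝ) 1, 0 ≤ x₁ t) ∧ (∀ t ∈ Set.Icc (0:ℝ) 1, 0 ≤ x₂ t) ∧
      sSup ((fun t => |x₁ t|) '' Set.Icc (0:ℝ) 1) = r ∧ 0 < μ ∧
      ∀ t ∈ Set.Icc (0:ℝ) 1,
        x₁ t = (∫ s in (0:ℝ)..1, G t s * f s (x₁ s) (x₂ s))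
          + μ * Real.cos (π * t / 2) := by
  rintro ⟨x₁, x₂, μ, hx₁c, hx₂c, hx₁0, hx₂0, hsup, hμ, heq⟩
  have hπ : (0:ℝ) < π := Real.pi_pos
  set F : ℝ → ℝ := fun s => f s (x₁ s) (x₂ s) with hFdef
  -- continuity of F on [0,1]
  have hFcont : ContinuousOn F (Set.Icc 0 1) := by
    apply hf.comp (continuousOn_id.prodMk (hx₁c.prodMk hx₂c))
    intro s hs
    exact ⟨hs, hx₁0 s hs, hx₂0 s hs⟩
  have hFnn : ∀ s ∈ Set.Icc (0:ℝ) 1, 0 ≤ F s := fun s hs =>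
    hfpos s hs _ (hx₁0 s hs) _ (hx₂0 s hs)
  -- G equals 1 - max t s on the square
  have hGmax : ∀ t ∈ Set.Icc (0:ℝ) 1, ∀ s ∈ Set.Icc (0:ℝ) 1, G t s = 1 - max t s := by
    intro t ht s hs
    rcases le_or_gt s t with h | h
    · rw [(hG t ht s hs).1 h, max_eq_left h]
    · rw [(hG t ht s hs).2 h, max_eq_right h.le]
  -- bound x₁ ≤ r
  have hbdd : BddAbove ((fun t => |x₁ t|) '' Set.Icc (0:ℝ) 1) :=
    (isCompact_Icc.image_of_continuousOn hx₁c.abs).bddAbove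
  have hle : ∀ t ∈ Set.Icc (0:ℝ) 1, x₁ t ≤ r := by
    intro t ht
    calc x₁ t ≤ |x₁ t| := le_abs_self _
    _ ≤ r := hsup ▸ le_csSup hbdd ⟨t, ht, rfl⟩
  -- cos nonneg on the interval
  have hcosnn : ∀ t ∈ Set.Icc (0:ℝ) 1, 0 ≤ Real.cos (π * t / 2) := by
    intro t ht
    apply Real.cos_nonneg_of_mem_Icc
    constructor
    · nlinarith [ht.1, ht.2]
    · nlinarith [ht.1, ht.2]
  set Q : ℝ := (π ^ 2 / 4 + ε) * (4 / π ^ 2) with hQdef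
  have hπ2 : (0:ℝ) < π ^ 2 := by positivity
  have hQ1 : 1 < Q := by
    have hQeq : Q = 1 + ε * (4 / π ^ 2) := by
      rw [hQdef]; field_simp
    rw [hQeq]
    have : 0 < ε * (4 / π ^ 2) := by positivity
    linarith
  have hQ0 : 0 < Q := by linarith
  -- step lemma
  have step : ∀ c : ℝ, 0 ≤ c → (∀ s ∈ Set.Icc (0:ℝ) 1, c * Real.cos (π * s / 2) ≤ x₁ s) →
      ∀ t ∈ Set.Icc (0:ℝ) 1, (Q * c + μ) * Real.cos (π * t / 2) ≤ x₁ t := by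
    intro c hc hcx t ht
    have hmaxle : ∀ s ∈ Set.Icc (0:ℝ) 1, max t s ≤ 1 := fun s hs => max_le ht.2 hs.2
    -- integrability
    have hcont1 : Continuous (fun s : ℝ => (1 - max t s) * ((π ^ 2 / 4 + ε) * (c * Real.cos (π * s / 2)))) :=
      (continuous_const.sub (continuous_const.max continuous_id)).mul
        (continuous_const.mul (continuous_const.mul
          (Real.continuous_cos.comp ((continuous_const.mul continuous_id).div_const 2))))
    have hint1 : IntervalIntegrable (fun s : ℝ => (1 - max t s) * ((π ^ 2 / 4 + ε) * (c * Real.cos (π * s / 2)))) volume 0 1 :=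
      hcont1.intervalIntegrable _ _
    have hGFcont : ContinuousOn (fun s : ℝ => (1 - max t s) * F s) (Set.Icc 0 1) :=
      ((continuous_const.sub (continuous_const.max continuous_id)).continuousOn).mul hFcont
    have hint2 : IntervalIntegrable (fun s : ℝ => (1 - max t s) * F s) volume 0 1 :=
      ContinuousOn.intervalIntegrable (by rw [Set.uIcc_of_le (zero_le_one (α := ℝ))]; exact hGFcont)
    -- rewrite G-integral
    have hcongr : (∫ s in (0:ℝ)..1, G t s * F s) = ∫ s in (0:ℝ)..1, (1 - max t s) * F s := by
      apply intervalIntegral.integral_congr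
      intro s hs
      rw [Set.uIcc_of_le zero_le_one] at hs
      show G t s * F s = (1 - max t s) * F s
      rw [hGmax t ht s hs]
    -- pointwise comparison
    have hptwise : ∀ s ∈ Set.Icc (0:ℝ) 1,
        (1 - max t s) * ((π ^ 2 / 4 + ε) * (c * Real.cos (π * s / 2))) ≤ (1 - max t s) * F s := by
      intro s hs
      have hG0 : 0 ≤ 1 - max t s := by linarith [hmaxle s hs]
      apply mul_le_mul_of_nonneg_left _ hG0
      have hx1δ : x₁ s ∈ Set.Icc (0:ℝ) δ := ⟨hx₁0 s hs, le_trans (hle s hs) hrδ.le⟩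
      have h1 : (π ^ 2 / 4 + ε) * x₁ s ≤ F s := hgrow s hs _ hx1δ _ (hx₂0 s hs)
      have h2 : (π ^ 2 / 4 + ε) * (c * Real.cos (π * s / 2)) ≤ (π ^ 2 / 4 + ε) * x₁ s := by
        apply mul_le_mul_of_nonneg_left (hcx s hs)
        positivity
      linarith
    have hmono := intervalIntegral.integral_mono_on zero_le_one hint1 hint2 hptwise
    -- compute LHS integral
    have hcomp : (∫ s in (0:ℝ)..1, (1 - max t s) * ((π ^ 2 / 4 + ε) * (c * Real.cos (π * s / 2))))
        = Q * c * Real.cos (π * t / 2) := by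
      have e : (fun s : ℝ => (1 - max t s) * ((π ^ 2 / 4 + ε) * (c * Real.cos (π * s / 2))))
          = fun s : ℝ => ((π ^ 2 / 4 + ε) * c) * ((1 - max t s) * Real.cos (π * s / 2)) := by
        funext s; ring
      rw [e, intervalIntegral.integral_const_mul, aux_key t ht, hQdef]
      ring
    have := heq t ht
    rw [this, hcongr]
    have hfin : Q * c * Real.cos (π * t / 2) ≤ ∫ s in (0:ℝ)..1, (1 - max t s) * F s := by
      rw [← hcomp]; exact hmono
    linarith [hfin]
  -- induction: Q^n * μ works
  have good : ∀ n : ℕ, ∀ t ∈ Set.Icc (0:ℝ) 1, (Q ^ n * μ) * Real.cos (π * t / 2) ≤ x₁ t := by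
    intro n
    induction n with
    | zero =>
      have h0 := step 0 le_rfl (fun s hs => by simpa using hx₁0 s hs)
      intro t ht
      have := h0 t ht
      simpa using this
    | succ n ih =>
      intro t ht
      have h1 := step (Q ^ n * μ) (by positivity) ih t ht
      have h2 : (Q ^ (n+1) * μ) * Real.cos (π * t / 2) ≤ (Q * (Q ^ n * μ) + μ) * Real.cos (π * t / 2) := by
        apply mul_le_mul_of_nonneg_right _ (hcosnn t ht)
        have : Q ^ (n+1) * μ = Q * (Q ^ n * μ) := by ring
        rw [this]; linarith
      linarith
  -- contradiction at t = 0
  obtain ⟨n, hn⟩ := pow_unbounded_of_one_lt (r / μ) hQ1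
  have h0 : (Q ^ n * μ) * Real.cos (π * 0 / 2) ≤ x₁ 0 :=
    good n 0 (by norm_num)
  rw [show π * 0 / 2 = 0 by ring, Real.cos_zero, mul_one] at h0
  have hx0r : x₁ 0 ≤ r := hle 0 (by norm_num)
  have : r < Q ^ n * μ := by
    rw [div_lt_iff₀ hμ] at hn
    linarith [hn]
  linarith
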